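/- Tight relaxation theorem: with notation of the replication relaxation, the relaxed bilevel value R equals the pessimistic value P_p, i.e., inf_{(λ,θ̄): θ̄∈C(λ)} sup_{θ∈C(λ), h(θ)≤h(θ̄)} F(λ,θ) = inf_λ sup_{θ∈Ψ(λ)} F(λ,θ), provided for every λ and every θ̄ ∈ C(λ) the level set {θ ∈ C(λ) : h(θ) ≤ h(θ̄)} contains Ψ(λ) whenever θ̄ is optimal, and Ψ(λ) ≠ ∅ for all λ. -/
import Mathlib


/-- Tight relaxation: the replication-relaxed bilevel value equals the pessimistic value. -/
theorem relaxation_eq_pessimistic {Λ Θ : Type*} [Nonempty Λ] [Nonempty Θ]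
    (F : Λ × Θ → ℝ) (h : Θ → ℝ) (C : Λ → Set Θ) (hC : ∀ l, (C l).Nonempty)
    (Ψ : Λ → Set Θ)
    (hΨ : ∀ l, Ψ l = {θ ∈ C l | ∀ θ' ∈ C l, h θ ≤ h θ'})
    (hne : ∀ l, (Ψ l).Nonempty) :
    (⨅ l : Λ, ⨅ θbar ∈ C l, ⨆ θ ∈ {θ ∈ C l | h θ ≤ h θbar}, (F (l, θ) : EReal)) =
      ⨅ l : Λ, ⨆ θ ∈ Ψ l, (F (l, θ) : EReal) := by
  refine iInf_congr fun l => ?_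
  obtain ⟨θ0, hθ0⟩ := hne l
  have hθ0' := hθ0
  rw [hΨ l] at hθ0'
  obtain ⟨hθ0C, hθ0min⟩ := hθ0'
  apply le_antisymm
  · -- inf ≤ value at θ0, whose level set equals Ψ l
    refine le_trans (iInf₂_le θ0 hθ0C) ?_
    have hset : {θ ∈ C l | h θ ≤ h θ0} = Ψ l := by
      rw [hΨ l]
      ext θ
      constructor
      · rintro ⟨hθC, hle⟩
        exact ⟨hθC, fun θ' hθ' => le_trans hle (hθ0min θ' hθ')⟩
      · rintro ⟨hθC, hmin⟩
        exact ⟨hθC, hmin θ0 hθ0C⟩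
    rw [hset]
  · -- T ≤ S θbar for every θbar ∈ C l
    refine le_iInf₂ fun θbar hθbar => ?_
    refine iSup₂_le fun θ hθ => ?_
    rw [hΨ l] at hθ
    exact le_iSup₂ (f := fun θ _ => (F (l, θ) : EReal)) θ ⟨hθ.1, hθ.2 θbar hθbar⟩
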